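/- The marginal distribution at time 0 induced by composing the soft optimal policies p⋆_{t-1}(x_{t-1}|x_t) ∝ p_{t-1}(x_{t-1}|x_t)·exp(v_{t-1}(x_{t-1})/α) from t = T+1 down to t = 1, starting from the pre-trained initial distribution p_T, equals the tilted distribution p^(α)(x_0) ∝ exp(r(x_0)/α)·p_pre(x_0), where p_pre is the marginal at time 0 of the pre-trained process. -/

import Mathlib

open MeasureTheory ProbabilityTheory Real

/-- The time-`0` marginal induced by composing the soft optimal policies
`p⋆_{t-1}(x_{t-1}|x_t) ∝ p_{t-1}(x_{t-1}|x_t)·exp(v_{t-1}(x_{t-1})/α)` from `t = T+1`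
down to `t = 1`, starting from the tilted initial distribution
`p⋆_T ∝ p_T·exp(v_T/α)`, equals the tilted distribution
`p^(α)(x_0) ∝ exp(r(x_0)/α)·p_pre(x_0)`, where `p_pre` is the time-`0` marginal of the
pre-trained process. -/
theorem soft_optimal_marginal_is_tilted
    {X : Type*} [MeasurableSpace X] (T : ℕ)
    (pT : Measure X) [IsProbabilityMeasure pT]
    (K : ℕ → Kernel X X) (hK : ∀ t, IsMarkovKernel (K t))
    (r : X → ℝ) (hr : Measurable r) (C : ℝ) (hrb : ∀ x, |r x| ≤ C)
    (α : ℝ) (hα : 0 < α)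
    (chain : ℕ → Kernel X X)
    (hchain0 : chain 0 = Kernel.id)
    (hchainS : ∀ t, chain (t + 1) = (chain t).comp (K (t + 1)))
    (v : ℕ → X → ℝ)
    (hv : ∀ t x, v t x = α * log (∫ x0, exp (r x0 / α) ∂(chain t x)))
    (Kstar : ℕ → Kernel X X)
    (hKstar : ∀ t x, (Kstar t) x =
      ((K t) x).withDensity
        (fun y => ENNReal.ofReal (exp (v (t - 1) y / α) / exp (v t x / α))))
    (chainStar : ℕ → Kernel X X)
    (hchainStar0 : chainStar 0 = Kernel.id)
    (hchainStarS : ∀ t, chainStar (t + 1) = (chainStar t).comp (Kstar (t + 1))) :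
    letI Z : ℝ := ∫ x, exp (v T x / α) ∂pT
    letI pTstar : Measure X :=
      pT.withDensity (fun x => ENNReal.ofReal (exp (v T x / α) / Z))
    pTstar.bind (fun x => (chainStar T) x) =
      (pT.bind (fun x => (chain T) x)).withDensity
        (fun x0 => ENNReal.ofReal (exp (r x0 / α) / Z)) := by
  have hα' : α ≠ 0 := hα.ne'
  set g : X → ENNReal := fun y => ENNReal.ofReal (exp (r y / α)) with hgdef
  have hrexp : Measurable fun y => exp (r y / α) := (hr.div_const α).exp
  have hgmeas : Measurable g := hrexp.ennreal_ofReal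
  -- the pre-trained chain is Markov
  have hMarkov : ∀ t, IsMarkovKernel (chain t) := by
    intro t
    induction t with
    | zero => rw [hchain0]; infer_instance
    | succ t ih =>
      rw [hchainS]
      haveI := hK (t + 1)
      haveI := ih
      infer_instance
  -- integrability of exp(r/α) against any probability measure
  have hint : ∀ (μ : Measure X) [IsProbabilityMeasure μ],
      Integrable (fun x0 => exp (r x0 / α)) μ := by
    intro μ _
    refine (integrable_const (exp (C / α))).mono' hrexp.aestronglyMeasurable
      (Filter.Eventually.of_forall fun x => ?_)
    rw [norm_of_nonneg (exp_pos _).le]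
    exact exp_le_exp.2 (by gcongr; exact (abs_le.1 (hrb x)).2)
  -- bounds on the expected reward weight
  have hJlb : ∀ t x, exp (-C / α) ≤ ∫ x0, exp (r x0 / α) ∂(chain t x) := by
    intro t x
    haveI := hMarkov t
    have h0 : (∫ _x0, exp (-C / α) ∂(chain t x)) = exp (-C / α) := by simp
    rw [← h0]
    exact integral_mono (integrable_const _) (hint _)
      (fun x0 => exp_le_exp.2 (by gcongr; exact (abs_le.1 (hrb x0)).1))
  have hJub : ∀ t x, (∫ x0, exp (r x0 / α) ∂(chain t x)) ≤ exp (C / α) := by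
    intro t x
    haveI := hMarkov t
    have h0 : (∫ _x0, exp (C / α) ∂(chain t x)) = exp (C / α) := by simp
    rw [← h0]
    exact integral_mono (hint _) (integrable_const _)
      (fun x0 => exp_le_exp.2 (by gcongr; exact (abs_le.1 (hrb x0)).2))
  have hJpos : ∀ t x, 0 < ∫ x0, exp (r x0 / α) ∂(chain t x) :=
    fun t x => lt_of_lt_of_le (exp_pos _) (hJlb t x)
  -- exp(v t x / α) is the expected reward weight
  have hexpv : ∀ t x, exp (v t x / α) = ∫ x0, exp (r x0 / α) ∂(chain t x) := by
    intro t x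
    rw [hv, mul_div_cancel_left₀ _ hα', exp_log (hJpos t x)]
  have hIeq : ∀ t x, ENNReal.ofReal (exp (v t x / α)) = ∫⁻ y, g y ∂(chain t x) := by
    intro t x
    haveI := hMarkov t
    rw [hexpv]
    exact ofReal_integral_eq_lintegral_ofReal (hint _)
      (Filter.Eventually.of_forall fun y => (exp_pos _).le)
  have hIne0 : ∀ t x, (∫⁻ y, g y ∂(chain t x)) ≠ 0 := by
    intro t x
    rw [← hIeq]
    exact (ENNReal.ofReal_pos.2 (exp_pos _)).ne'
  have hInetop : ∀ t x, (∫⁻ y, g y ∂(chain t x)) ≠ ⊤ := by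
    intro t x
    rw [← hIeq]
    exact ENNReal.ofReal_ne_top
  -- measurability of v
  have hvmeas : ∀ t, Measurable (v t) := by
    intro t
    haveI := hMarkov t
    have h1 : Measurable fun x => ∫⁻ y, g y ∂(chain t x) :=
      Measurable.lintegral_kernel hgmeas
    have h2 : v t = fun x => α * log ((∫⁻ y, g y ∂(chain t x)).toReal) := by
      funext x
      rw [hv]
      congr 1
      rw [integral_eq_lintegral_of_nonneg_ae
        (Filter.Eventually.of_forall fun y => (exp_pos (r y / α)).le)
        hrexp.aestronglyMeasurable]
    rw [h2]
    exact measurable_const.mul (Real.measurable_log.comp h1.ennreal_toReal)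
  -- algebraic cancellation in ENNReal
  have key : ∀ (a A c : ENNReal), a ≠ 0 → a ≠ ⊤ → a / c * (A / a) = A / c := by
    intro a A c h0 ht
    rw [div_eq_mul_inv, div_eq_mul_inv, div_eq_mul_inv]
    calc a * c⁻¹ * (A * a⁻¹) = A * (a * a⁻¹) * c⁻¹ := by ring
      _ = A * c⁻¹ := by rw [ENNReal.mul_inv_cancel h0 ht, mul_one]
  -- main claim: the soft-optimal chain is the tilted chain
  have hmain : ∀ t x (s : Set X), MeasurableSet s →
      (chainStar t) x s = (∫⁻ z in s, g z ∂((chain t) x)) / (∫⁻ y, g y ∂((chain t) x)) := by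
    intro t
    induction t with
    | zero =>
      intro x s hs
      rw [hchainStar0, hchain0, Kernel.id_apply]
      classical
      rw [lintegral_dirac' _ hgmeas, setLIntegral_dirac' hgmeas hs, Measure.dirac_apply' _ hs]
      by_cases hx : x ∈ s
      · simp only [hx, if_true, Set.indicator_of_mem hx, Pi.one_apply]
        exact (ENNReal.div_self (by simpa [hgdef] using (ENNReal.ofReal_pos.2 (exp_pos _)).ne')
          (by simp [hgdef])).symm
      · simp [hx]
    | succ t ih =>
      intro x s hs
      haveI := hK (t + 1)
      haveI := hMarkov t
      haveI := hMarkov (t + 1)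
      have hdmeas : Measurable fun y =>
          ENNReal.ofReal (exp (v t y / α) / exp (v (t + 1) x / α)) :=
        ((((hvmeas t).div_const α).exp).div_const _).ennreal_ofReal
      rw [hchainStarS, Kernel.comp_apply' _ _ _ hs, hKstar]
      simp only [Nat.add_sub_cancel]
      rw [lintegral_withDensity_eq_lintegral_mul _ hdmeas ((chainStar t).measurable_coe hs)]
      have hptw : ∀ y, ENNReal.ofReal (exp (v t y / α) / exp (v (t + 1) x / α)) *
            (chainStar t) y s
          = (∫⁻ z in s, g z ∂((chain t) y)) * (∫⁻ y', g y' ∂((chain (t + 1)) x))⁻¹ := by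
        intro y
        rw [ENNReal.ofReal_div_of_pos (exp_pos _), hIeq t y, hIeq (t + 1) x, ih y s hs,
          key _ _ _ (hIne0 t y) (hInetop t y), div_eq_mul_inv]
      simp only [Pi.mul_apply]
      rw [lintegral_congr hptw,
        lintegral_mul_const' _ _ (ENNReal.inv_ne_top.2 (hIne0 (t + 1) x))]
      have hset : ∀ (μ : Measure X), (∫⁻ z in s, g z ∂μ) = ∫⁻ z, s.indicator g z ∂μ :=
        fun μ => (lintegral_indicator hs g).symm
      have hcomp : (∫⁻ y, ∫⁻ z in s, g z ∂((chain t) y) ∂((K (t + 1)) x))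
          = ∫⁻ z in s, g z ∂((chain (t + 1)) x) := by
        simp_rw [hset]
        rw [hchainS, Kernel.lintegral_comp _ _ _ (hgmeas.indicator hs)]
      rw [hcomp, ← div_eq_mul_inv]
  -- positivity of the normalizing constant
  have hvint : Integrable (fun x => exp (v T x / α)) pT := by
    refine (integrable_const (exp (C / α))).mono'
      (((hvmeas T).div_const α).exp).aestronglyMeasurable
      (Filter.Eventually.of_forall fun x => ?_)
    rw [norm_of_nonneg (exp_pos _).le, hexpv]
    exact hJub T x
  have hZpos : 0 < ∫ x, exp (v T x / α) ∂pT := by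
    have h0 : (∫ _x, exp (-C / α) ∂pT) = exp (-C / α) := by simp
    refine lt_of_lt_of_le (exp_pos (-C / α)) ?_
    rw [← h0]
    refine integral_mono (integrable_const _) hvint fun x => ?_
    rw [hexpv]
    exact hJlb T x
  -- conclusion
  refine Measure.ext fun s hs => ?_
  have hdT : Measurable fun x =>
      ENNReal.ofReal (exp (v T x / α) / ∫ x, exp (v T x / α) ∂pT) :=
    ((((hvmeas T).div_const α).exp).div_const _).ennreal_ofReal
  rw [Measure.bind_apply hs (chainStar T).measurable.aemeasurable, withDensity_apply _ hs,
    lintegral_withDensity_eq_lintegral_mul _ hdT ((chainStar T).measurable_coe hs)]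
  have hptw : ∀ x,
        ENNReal.ofReal (exp (v T x / α) / ∫ x, exp (v T x / α) ∂pT) * (chainStar T) x s
      = (∫⁻ z in s, g z ∂((chain T) x)) * (ENNReal.ofReal (∫ x, exp (v T x / α) ∂pT))⁻¹ := by
    intro x
    rw [ENNReal.ofReal_div_of_pos hZpos, hIeq T x, hmain T x s hs,
      key _ _ _ (hIne0 T x) (hInetop T x), div_eq_mul_inv]
  have hZne0 : ENNReal.ofReal (∫ x, exp (v T x / α) ∂pT) ≠ 0 :=
    (ENNReal.ofReal_pos.2 hZpos).ne'
  simp only [Pi.mul_apply]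
  rw [lintegral_congr hptw, lintegral_mul_const' _ _ (ENNReal.inv_ne_top.2 hZne0)]
  have hbind : (∫⁻ x, ∫⁻ z in s, g z ∂((chain T) x) ∂pT)
      = ∫⁻ z in s, g z ∂(pT.bind fun x => (chain T) x) := by
    simp_rw [← lintegral_indicator hs g]
    rw [Measure.lintegral_bind (chain T).measurable.aemeasurable (hgmeas.indicator hs).aemeasurable]
  rw [hbind]
  have hrhs : ∀ z, ENNReal.ofReal (exp (r z / α) / ∫ x, exp (v T x / α) ∂pT)
      = g z * (ENNReal.ofReal (∫ x, exp (v T x / α) ∂pT))⁻¹ := by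
    intro z
    rw [ENNReal.ofReal_div_of_pos hZpos, div_eq_mul_inv]
  simp_rw [hrhs]
  rw [lintegral_mul_const' _ _ (ENNReal.inv_ne_top.2 hZne0)]
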